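/- arXiv:1512.08272 — 3 statements merged into one kernel-verified Lean document; each statement's English description precedes it below -/
import Mathlib

section
/- If the system $\{L_1,\dots,L_k\}$ of subspaces of $\mathbb{R}^d$ is transitive, i.e. the group $\mathcal{G}$ generated by $\mathcal{G}_1,\dots,\mathcal{G}_k$ acts transitively on the unit sphere $S^{d-1}$, then the system has the Orthogonal Non-Splitting Property (ONSP). -/
noncomputable section

/-- The group `𝒢ᵢ` of special orthogonal transformations of `ℝ^d` fixing `Aᵢ = Lᵢᗮ`
pointwise (equivalently, rotations across `Aᵢ`). -/
def rotationsFixing {d : ℕ} (L : Submodule ℝ (EuclideanSpace ℝ (Fin d))) :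
    Set (EuclideanSpace ℝ (Fin d) ≃ₗᵢ[ℝ] EuclideanSpace ℝ (Fin d)) :=
  {U | LinearEquiv.det U.toLinearEquiv = 1 ∧ ∀ a ∈ Lᗮ, U a = a}

/-- The subgroup `𝒢` of `SO(d)` generated by `𝒢₁, …, 𝒢ₖ`. -/
def rotGroup {d k : ℕ} (L : Fin k → Submodule ℝ (EuclideanSpace ℝ (Fin d))) :
    Subgroup (EuclideanSpace ℝ (Fin d) ≃ₗᵢ[ℝ] EuclideanSpace ℝ (Fin d)) :=
  Subgroup.closure (⋃ i, rotationsFixing (L i))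

/-- Transitivity of the system `{L₁,…,L_k}`: `𝒢` acts transitively on the unit sphere. -/
def IsTransitiveSystem {d k : ℕ} (L : Fin k → Submodule ℝ (EuclideanSpace ℝ (Fin d))) : Prop :=
  ∀ u w : EuclideanSpace ℝ (Fin d), ‖u‖ = 1 → ‖w‖ = 1 → ∃ U ∈ rotGroup L, U u = w

/-- The Orthogonal Non-Splitting Property. -/
def HasONSP {d k : ℕ} (L : Fin k → Submodule ℝ (EuclideanSpace ℝ (Fin d))) : Prop :=
  ¬ ∃ B₁ B₂ : Submodule ℝ (EuclideanSpace ℝ (Fin d)),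
      B₁ ≠ ⊥ ∧ B₂ ≠ ⊥ ∧ (∀ x ∈ B₁, ∀ y ∈ B₂, inner ℝ x y = (0 : ℝ)) ∧ B₁ ⊔ B₂ = ⊤ ∧
      ∀ i, L i ≤ B₁ ∨ L i ≤ B₂

theorem transitive_implies_ONSP (d k : ℕ) (hd : 2 ≤ d)
    (L : Fin k → Submodule ℝ (EuclideanSpace ℝ (Fin d)))
    (hdim : ∀ i, 2 ≤ Module.finrank ℝ (L i))
    (htr : IsTransitiveSystem L) : HasONSP L := by
  rintro ⟨B₁, B₂, hB₁, hB₂, hperp, hsup, hsub⟩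
  -- `B₁ = B₂ᗮ`.
  have hB₁eq : B₁ = B₂ᗮ := by
    apply le_antisymm
    · intro x hx
      rw [Submodule.mem_orthogonal]
      intro y hy
      rw [real_inner_comm]
      exact hperp x hx y hy
    · intro x hx
      have hxtop : x ∈ B₁ ⊔ B₂ := by rw [hsup]; trivial
      obtain ⟨b₁, hb₁, b₂, hb₂, rfl⟩ := Submodule.mem_sup.mp hxtop
      have h1 : inner ℝ b₂ (b₁ + b₂) = (0 : ℝ) :=
        (Submodule.mem_orthogonal B₂ _).mp hx b₂ hb₂
      have h2 : inner ℝ b₂ b₁ = (0 : ℝ) := by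
        rw [real_inner_comm]; exact hperp b₁ hb₁ b₂ hb₂
      have h3 : inner ℝ b₂ b₂ = (0 : ℝ) := by
        have := h1
        rw [inner_add_right, h2, zero_add] at this
        exact this
      have hb₂0 : b₂ = 0 := inner_self_eq_zero.mp h3
      rw [hb₂0, add_zero]
      exact hb₁
  -- The subgroup preserving `B₁`.
  set H : Subgroup (EuclideanSpace ℝ (Fin d) ≃ₗᵢ[ℝ] EuclideanSpace ℝ (Fin d)) :=
    { carrier := {U | ∀ x, U x ∈ B₁ ↔ x ∈ B₁}
      one_mem' := by intro x; simp
      mul_mem' := by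
        intro U V hU hV x
        simpa using (hU (V x)).trans (hV x)
      inv_mem' := by
        intro U hU x
        constructor
        · intro h
          have := (hU (U⁻¹ x)).mpr h
          simpa using this
        · intro h
          apply (hU (U⁻¹ x)).mp
          simpa using h } with hH
  have hgen : (⋃ i, rotationsFixing (L i)) ⊆ H := by
    intro U hU
    obtain ⟨_, ⟨i, rfl⟩, hUi⟩ := hU
    obtain ⟨-, hfix⟩ := hUi
    rcases hsub i with hLi | hLi
    · -- `L i ≤ B₁`, so `U` fixes `B₂` pointwise.
      have hfixB₂ : ∀ y ∈ B₂, U y = y := by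
        intro y hy
        apply hfix
        rw [Submodule.mem_orthogonal]
        intro u hu
        exact hperp u (hLi hu) y hy
      intro x
      rw [hB₁eq, Submodule.mem_orthogonal, Submodule.mem_orthogonal]
      constructor
      · intro h y hy
        have := h y hy
        rw [← hfixB₂ y hy, LinearIsometryEquiv.inner_map_map] at this
        exact this
      · intro h y hy
        rw [← hfixB₂ y hy, LinearIsometryEquiv.inner_map_map]
        exact h y hy
    · -- `L i ≤ B₂`, so `U` fixes `B₁` pointwise.
      have hfixB₁ : ∀ y ∈ B₁, U y = y := by
        intro y hy
        apply hfix
        rw [Submodule.mem_orthogonal]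
        intro u hu
        rw [real_inner_comm]
        exact hperp y hy u (hLi hu)
      intro x
      constructor
      · intro h
        have h2 : U (U x) = U x := hfixB₁ (U x) h
        have h3 : U x = x := U.injective h2
        rwa [← h3]
      · intro h
        rw [hfixB₁ x h]
        exact h
  have hle : rotGroup L ≤ H := (Subgroup.closure_le H).mpr hgen
  -- Pick unit vectors in `B₁` and `B₂` and derive a contradiction.
  obtain ⟨u, hu, hu0⟩ := Submodule.exists_mem_ne_zero_of_ne_bot hB₁
  obtain ⟨w, hw, hw0⟩ := Submodule.exists_mem_ne_zero_of_ne_bot hB₂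
  set u' := ‖u‖⁻¹ • u with hu'
  set w' := ‖w‖⁻¹ • w with hw'
  have hu'B : u' ∈ B₁ := B₁.smul_mem _ hu
  have hw'B : w' ∈ B₂ := B₂.smul_mem _ hw
  have hu'n : ‖u'‖ = 1 := by
    rw [hu', norm_smul, norm_inv, norm_norm]
    field_simp [norm_ne_zero_iff.mpr hu0]
  have hw'n : ‖w'‖ = 1 := by
    rw [hw', norm_smul, norm_inv, norm_norm]
    field_simp [norm_ne_zero_iff.mpr hw0]
  obtain ⟨U, hUmem, hUuw⟩ := htr u' w' hu'n hw'n
  have hw'B₁ : w' ∈ B₁ := by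
    have := hle hUmem
    have h := (this u').mpr hu'B
    rwa [hUuw] at h
  have : inner ℝ w' w' = (0 : ℝ) := hperp w' hw'B₁ w' hw'B
  have hw'0 : w' = 0 := inner_self_eq_zero.mp this
  rw [hw'0, norm_zero] at hw'n
  norm_num at hw'n
end
end

section
/- If the system $\{L_1,\dots,L_k\}$ of subspaces of $\mathbb{R}^d$ has the Orthogonal Non-Splitting Property (ONSP), then the natural representation of $\mathcal{G}$ on $\mathbb{R}^d$ is irreducible, i.e. the only linear subspaces of $\mathbb{R}^d$ invariant under every element of $\mathcal{G}$ are $\{0\}$ and $\mathbb{R}^d$. -/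
noncomputable section

/-- Irreducibility of the natural representation of `𝒢` on `ℝ^d`: the only
`𝒢`-invariant subspaces are `{0}` and `ℝ^d`. -/
def IsIrreducibleSystem {d k : ℕ} (L : Fin k → Submodule ℝ (EuclideanSpace ℝ (Fin d))) : Prop :=
  ∀ W : Submodule ℝ (EuclideanSpace ℝ (Fin d)),
    (∀ U ∈ rotGroup L, ∀ x ∈ W, U x ∈ W) → W = ⊥ ∨ W = ⊤

open Module Submodule RealInnerProductSpace in
/-- Key construction: within `L` of dimension ≥ 2, any two vectors of the same norm
are related by a special orthogonal map fixing `Lᗮ` pointwise. -/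
lemma exists_rotation {d : ℕ} (L : Submodule ℝ (EuclideanSpace ℝ (Fin d)))
    (hL : 2 ≤ finrank ℝ L) {p w : EuclideanSpace ℝ (Fin d)}
    (hp : p ∈ L) (hw : w ∈ L) (hnorm : ‖w‖ = ‖p‖) :
    ∃ U ∈ rotationsFixing L, U p = w := by
  by_cases hpw : p = w
  · exact ⟨LinearIsometryEquiv.refl ℝ _, ⟨by rw [show (LinearIsometryEquiv.refl ℝ (EuclideanSpace ℝ (Fin d))).toLinearEquiv = LinearEquiv.refl ℝ _ from rfl]; exact map_one LinearEquiv.det, fun a _ => rfl⟩, hpw⟩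
  · set v := p - w with hv_def
    have hv : v ≠ 0 := sub_ne_zero.2 hpw
    have hvL : v ∈ L := L.sub_mem hp hw
    have hw0 : w ≠ 0 := by
      rintro rfl
      apply hpw
      have h0 : ‖p‖ = 0 := by simpa using hnorm.symm
      simpa using norm_eq_zero.mp h0
    -- find u ∈ L orthogonal to w
    have hspan : (ℝ ∙ w) ≤ L := (span_singleton_le_iff_mem _ _).2 hw
    have hfr := Submodule.finrank_add_inf_finrank_orthogonal hspan
    rw [finrank_span_singleton hw0] at hfr
    have hpos : 0 < finrank ℝ ((ℝ ∙ w)ᗮ ⊓ L : Submodule ℝ (EuclideanSpace ℝ (Fin d))) := by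
      omega
    obtain ⟨u, hu_mem, hu0⟩ : ∃ u, u ∈ (ℝ ∙ w)ᗮ ⊓ L ∧ u ≠ 0 := by
      haveI := finrank_pos_iff (R := ℝ)
          (M := ((ℝ ∙ w)ᗮ ⊓ L : Submodule ℝ (EuclideanSpace ℝ (Fin d)))) |>.1 hpos
      obtain ⟨x, hx0⟩ :=
        exists_ne (0 : ((ℝ ∙ w)ᗮ ⊓ L : Submodule ℝ (EuclideanSpace ℝ (Fin d))))
      exact ⟨x, x.2, fun h => hx0 (Subtype.ext h)⟩
    have huL : u ∈ L := hu_mem.2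
    have huw : ⟪u, w⟫ = 0 := by
      have := (mem_orthogonal_singleton_iff_inner_right).1 hu_mem.1
      rwa [real_inner_comm] at this
    set R₁ := reflection ((ℝ ∙ v)ᗮ) with hR₁
    set R₂ := reflection ((ℝ ∙ u)ᗮ) with hR₂
    have hR₁p : R₁ p = w := by
      rw [hR₁, reflection_orthogonal_apply, reflection_singleton_apply]
      have hs : ⟪v, p⟫ = ‖p‖ ^ 2 - ⟪w, p⟫ := by
        rw [hv_def, inner_sub_left, real_inner_self_eq_norm_sq]
      have hvnorm : (‖v‖ : ℝ) ^ 2 = 2 * (‖p‖ ^ 2 - ⟪w, p⟫) := by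
        rw [← real_inner_self_eq_norm_sq, hv_def, inner_sub_left, inner_sub_right,
          inner_sub_right, real_inner_self_eq_norm_sq, real_inner_self_eq_norm_sq,
          real_inner_comm p w, hnorm]
        ring
      have hne : ‖p‖ ^ 2 - ⟪w, p⟫ ≠ 0 := by
        intro h
        apply hv
        have h2 : ‖v‖ ^ 2 = 0 := by rw [hvnorm, h]; ring
        simpa using pow_eq_zero_iff (n := 2) (by norm_num) |>.1 h2
      have hc : ⟪v, p⟫ / (‖v‖ : ℝ) ^ 2 = 1 / 2 := by
        rw [hs, hvnorm, mul_comm, div_mul_eq_div_div, div_self hne]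
      simp only [RCLike.ofReal_real_eq_id, id_eq]
      rw [hc]
      have h2 : (2 : ℕ) • ((1 / 2 : ℝ) • v) = v := by
        rw [two_smul, ← add_smul]; norm_num
      rw [h2]
      simp [hv_def]
    have hwK₂ : w ∈ (ℝ ∙ u)ᗮ := mem_orthogonal_singleton_iff_inner_right.2 huw
    refine ⟨R₁.trans R₂, ⟨?_, ?_⟩, ?_⟩
    · -- determinant 1
      have h1 : LinearEquiv.det (R₁.trans R₂).toLinearEquiv
          = LinearEquiv.det R₂.toLinearEquiv * LinearEquiv.det R₁.toLinearEquiv :=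
        LinearEquiv.det_trans _ _
      have hvv : ((ℝ ∙ v)ᗮ)ᗮ = (ℝ ∙ v) := Submodule.orthogonal_orthogonal _
      have huu : ((ℝ ∙ u)ᗮ)ᗮ = (ℝ ∙ u) := Submodule.orthogonal_orthogonal _
      rw [h1, hR₁, hR₂, linearEquiv_det_reflection, linearEquiv_det_reflection, hvv, huu,
        finrank_span_singleton hv, finrank_span_singleton hu0]
      norm_num
    · -- fixes Lᗮ pointwise
      intro a ha
      have h₁ : a ∈ (ℝ ∙ v)ᗮ :=
        Submodule.orthogonal_le ((span_singleton_le_iff_mem _ _).2 hvL) ha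
      have h₂ : a ∈ (ℝ ∙ u)ᗮ :=
        Submodule.orthogonal_le ((span_singleton_le_iff_mem _ _).2 huL) ha
      simp only [LinearIsometryEquiv.trans_apply]
      rw [hR₁, hR₂, reflection_mem_subspace_eq_self h₁, reflection_mem_subspace_eq_self h₂]
    · -- maps p to w
      simp only [LinearIsometryEquiv.trans_apply, hR₁p]
      exact reflection_mem_subspace_eq_self hwK₂

open Module Submodule RealInnerProductSpace in
theorem ONSP_implies_irreducible (d k : ℕ) (hd : 2 ≤ d)
    (L : Fin k → Submodule ℝ (EuclideanSpace ℝ (Fin d)))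
    (hdim : ∀ i, 2 ≤ Module.finrank ℝ (L i))
    (honsp : HasONSP L) : IsIrreducibleSystem L := by
  intro W hWinv
  by_cases hbot : W = ⊥
  · exact Or.inl hbot
  right
  by_contra htop
  apply honsp
  refine ⟨W, Wᗮ, hbot, ?_, ?_, ?_, ?_⟩
  · rwa [ne_eq, Submodule.orthogonal_eq_bot_iff]
  · intro x hx y hy
    exact (Submodule.mem_orthogonal W y).1 hy x hx
  · exact Submodule.sup_orthogonal_of_hasOrthogonalProjection
  · intro i
    by_cases hcase : ∀ x ∈ W, x ∈ (L i)ᗮ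
    · right
      calc L i ≤ (L i)ᗮᗮ := Submodule.le_orthogonal_orthogonal _
        _ ≤ Wᗮ := Submodule.orthogonal_le hcase
    · left
      push_neg at hcase
      obtain ⟨x, hxW, hxo⟩ := hcase
      set p : EuclideanSpace ℝ (Fin d) := ((orthogonalProjection (L i) x : ↥(L i)) : EuclideanSpace ℝ (Fin d)) with hp_def
      have hpL : p ∈ L i := (orthogonalProjection (L i) x).2
      have hp0 : p ≠ 0 := by
        intro h
        apply hxo
        apply Submodule.orthogonalProjectionOnto_eq_zero_iff.1
        exact Subtype.ext h
      have hq : x - p ∈ (L i)ᗮ := Submodule.sub_starProjection_mem_orthogonal x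
      have step : ∀ w ∈ L i, ‖w‖ = ‖p‖ → w - p ∈ W := by
        intro w hw hnw
        obtain ⟨U, hU, hUp⟩ := exists_rotation (L i) (hdim i) hpL hw hnw
        have hUG : U ∈ rotGroup L := Subgroup.subset_closure (Set.mem_iUnion.2 ⟨i, hU⟩)
        have hUx : U x ∈ W := hWinv U hUG x hxW
        have hUq : U (x - p) = x - p := hU.2 _ hq
        have hUxe : U x = w + (x - p) := by
          have hx_eq : x = p + (x - p) := by abel
          calc U x = U (p + (x - p)) := by rw [← hx_eq]
            _ = U p + U (x - p) := by rw [map_add]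
            _ = w + (x - p) := by rw [hUp, hUq]
        have heq : w - p = U x - x := by rw [hUxe]; abel
        rw [heq]
        exact W.sub_mem hUx hxW
      have step2 : ∀ w ∈ L i, ‖w‖ = ‖p‖ → w ∈ W := by
        intro w hw hnw
        have h1 := step w hw hnw
        have h2 := step (-w) (neg_mem hw) (by simpa using hnw)
        have hsum : (2 : ℝ) • w = (w - p) - (-w - p) := by
          rw [two_smul]; abel
        have hmem : (2 : ℝ) • w ∈ W := by rw [hsum]; exact W.sub_mem h1 h2
        have := W.smul_mem (1 / 2 : ℝ) hmem
        rwa [smul_smul, one_div, inv_mul_cancel₀ (by norm_num : (2:ℝ) ≠ 0), one_smul] at this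
      intro y hy
      by_cases hy0 : y = 0
      · simp [hy0]
      · have hyn : ‖y‖ ≠ 0 := norm_ne_zero_iff.2 hy0
        have hpn : ‖p‖ ≠ 0 := norm_ne_zero_iff.2 hp0
        have hwL : (‖p‖ / ‖y‖) • y ∈ L i := Submodule.smul_mem _ _ hy
        have hwn : ‖(‖p‖ / ‖y‖) • y‖ = ‖p‖ := by
          rw [norm_smul, Real.norm_eq_abs, abs_div, abs_of_nonneg (norm_nonneg p),
            abs_of_nonneg (norm_nonneg y), div_mul_cancel₀ _ hyn]
        have hwW := step2 _ hwL hwn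
        have hy_eq : y = (‖y‖ / ‖p‖) • ((‖p‖ / ‖y‖) • y) := by
          rw [smul_smul, div_mul_div_comm, mul_comm, div_self (by positivity), one_smul]
        rw [hy_eq]
        exact W.smul_mem _ hwW
end
end

section
/- Let $G$ be a (simple, undirected) graph on the vertex set $\{1,\dots,N\}$ with edge set $E$. The system of subspaces $\{L_{ij} : \{i,j\} \in E\}$ of $\mathcal{Z}$ has the Orthogonal Non-Splitting Property (there is no orthogonal splitting $\mathcal{Z} = B_1 \oplus B_2$ with $B_1 \ne 0$, $B_2 \ne 0$, $B_1 \perp B_2$, and every $L_{ij}$ with $\{i,j\} \in E$ contained in $B_1$ or in $B_2$) if and only if the graph $G$ is connected. -/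
noncomputable section

/-- The zero-total-momentum subspace `𝒵 ⊆ (ℝ^ν)^N`. -/
def momZero (N ν : ℕ) : Submodule ℝ (EuclideanSpace ℝ (Fin N × Fin ν)) where
  carrier := {v | ∀ a : Fin ν, ∑ i : Fin N, v (i, a) = 0}
  add_mem' := by
    intro x y hx hy a
    simp only [Set.mem_setOf_eq, PiLp.add_apply] at *
    simp [Finset.sum_add_distrib, hx a, hy a]
  zero_mem' := by intro a; simp
  smul_mem' := by
    intro c x hx a
    simp only [Set.mem_setOf_eq, PiLp.smul_apply, smul_eq_mul] at *
    simp [← Finset.mul_sum, hx a]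

/-- The base space `L_{ij} ⊆ 𝒵`: velocities supported on balls `i` and `j`. -/
def baseSpace (N ν : ℕ) (i j : Fin N) : Submodule ℝ ↥(momZero N ν) where
  carrier := {v | ∀ m : Fin N, m ≠ i → m ≠ j → ∀ a : Fin ν,
    (v : EuclideanSpace ℝ (Fin N × Fin ν)) (m, a) = 0}
  add_mem' := by
    intro x y hx hy m hm1 hm2 a
    simp [Set.mem_setOf_eq] at *
    simp [hx m hm1 hm2 a, hy m hm1 hm2 a]
  zero_mem' := by intro m _ _ a; simp
  smul_mem' := by
    intro c x hx m hm1 hm2 a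
    simp [Set.mem_setOf_eq] at *
    simp [hx m hm1 hm2 a]


open scoped RealInnerProductSpace

namespace ONSP
variable {N ν : ℕ}

/-- elementary zero-sum vector -/
def wvec (i j : Fin N) (a : Fin ν) : EuclideanSpace ℝ (Fin N × Fin ν) :=
  EuclideanSpace.single (i, a) 1 - EuclideanSpace.single (j, a) 1

lemma wvec_apply (i j : Fin N) (a : Fin ν) (p : Fin N × Fin ν) :
    wvec i j a p = (if p = (i, a) then 1 else 0) - (if p = (j, a) then 1 else 0) := by
  simp [wvec, EuclideanSpace.single_apply]

lemma wvec_mem (i j : Fin N) (a : Fin ν) : wvec i j a ∈ momZero N ν := by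
  intro b
  have : ∀ m : Fin N, wvec i j a (m, b) =
      (if (m, b) = (i, a) then 1 else 0) - (if (m, b) = (j, a) then (1:ℝ) else 0) :=
    fun m => wvec_apply i j a (m, b)
  rw [Finset.sum_congr rfl (fun m _ => this m), Finset.sum_sub_distrib]
  by_cases hb : b = a <;> simp [Prod.ext_iff, hb, Finset.filter_eq']

def wz (i j : Fin N) (a : Fin ν) : ↥(momZero N ν) := ⟨wvec i j a, wvec_mem i j a⟩

lemma wz_mem_base (i j : Fin N) (a : Fin ν) : wz i j a ∈ baseSpace N ν i j := by
  intro m hm1 hm2 b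
  show wvec i j a (m, b) = 0
  rw [wvec_apply]
  simp [Prod.ext_iff, hm1, hm2]

lemma inner_wz_left (i j : Fin N) (a : Fin ν) (y : ↥(momZero N ν)) :
    ⟪wz i j a, y⟫ = (y : EuclideanSpace ℝ (Fin N × Fin ν)) (i, a)
      - (y : EuclideanSpace ℝ (Fin N × Fin ν)) (j, a) := by
  rw [Submodule.coe_inner]
  show ⟪wvec i j a, (y : EuclideanSpace ℝ (Fin N × Fin ν))⟫ = _
  rw [wvec, inner_sub_left, EuclideanSpace.inner_single_left, EuclideanSpace.inner_single_left]
  simp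

lemma baseSpace_comm (i j : Fin N) : baseSpace N ν i j = baseSpace N ν j i := by
  ext v
  exact ⟨fun h m h1 h2 a => h m h2 h1 a, fun h m h1 h2 a => h m h2 h1 a⟩


variable {G : SimpleGraph (Fin N)} {B C : Submodule ℝ ↥(momZero N ν)}

/-- If two edges share their second vertex and one's base space lies in `B`,
while `B ⊥ C` and each edge space lies in `B` or `C`, the other also lies in `B`. -/
lemma step (hν : 0 < ν)
    (horth : ∀ x ∈ B, ∀ y ∈ C, ⟪x, y⟫ = 0)
    (hedge : ∀ i j : Fin N, G.Adj i j → baseSpace N ν i j ≤ B ∨ baseSpace N ν i j ≤ C)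
    {a b c : Fin N} (hab : G.Adj a b) (hcb : G.Adj c b)
    (hB : baseSpace N ν a b ≤ B) : baseSpace N ν c b ≤ B := by
  rcases hedge c b hcb with h | h
  · exact h
  exfalso
  set μ : Fin ν := ⟨0, hν⟩
  have h0 := horth (wz a b μ) (hB (wz_mem_base a b μ)) (wz c b μ) (h (wz_mem_base c b μ))
  rw [inner_wz_left] at h0
  have hab' : a ≠ b := hab.ne
  have hcb' : c ≠ b := hcb.ne
  rw [show ((wz c b μ : ↥(momZero N ν)) : EuclideanSpace ℝ (Fin N × Fin ν)) = wvec c b μ from rfl,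
    wvec_apply, wvec_apply] at h0
  simp only [Prod.mk.injEq, and_true] at h0
  split_ifs at h0 <;> simp_all

lemma all_edges_in (hν : 0 < ν) (hcon : G.Connected)
    (horth : ∀ x ∈ B, ∀ y ∈ C, ⟪x, y⟫ = 0)
    (hedge : ∀ i j : Fin N, G.Adj i j → baseSpace N ν i j ≤ B ∨ baseSpace N ν i j ≤ C)
    {i₀ j₀ : Fin N} (h₀ : G.Adj i₀ j₀) (hanchor : baseSpace N ν i₀ j₀ ≤ B) :
    ∀ i j : Fin N, G.Adj i j → baseSpace N ν i j ≤ B := by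
  have key : ∀ {x y : Fin N}, G.Walk x y →
      (∃ t, G.Adj t x ∧ baseSpace N ν t x ≤ B) →
      (∃ t, G.Adj t y ∧ baseSpace N ν t y ≤ B) := by
    intro x y p
    induction p with
    | nil => exact id
    | cons h _ ih =>
      rintro ⟨t, ht, hle⟩
      apply ih
      refine ⟨_, h, ?_⟩
      rw [baseSpace_comm]
      exact step hν horth hedge ht h.symm hle
  intro i j hij
  obtain ⟨p⟩ := hcon j₀ i
  obtain ⟨t, ht, hle⟩ := key p ⟨i₀, h₀, hanchor⟩
  rw [baseSpace_comm]
  exact step hν horth hedge ht hij.symm hle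

lemma side_eq_bot (hν : 0 < ν) (hN : 0 < N) (hcon : G.Connected)
    (horth : ∀ x ∈ B, ∀ y ∈ C, ⟪x, y⟫ = 0)
    (hedge : ∀ i j : Fin N, G.Adj i j → baseSpace N ν i j ≤ B ∨ baseSpace N ν i j ≤ C)
    {i₀ j₀ : Fin N} (h₀ : G.Adj i₀ j₀) (hanchor : baseSpace N ν i₀ j₀ ≤ B) :
    C = ⊥ := by
  have hall := all_edges_in hν hcon horth hedge h₀ hanchor
  rw [Submodule.eq_bot_iff]
  intro y hy
  have const : ∀ (a : Fin ν) {x z : Fin N}, G.Walk x z →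
      (y : EuclideanSpace ℝ (Fin N × Fin ν)) (x, a)
        = (y : EuclideanSpace ℝ (Fin N × Fin ν)) (z, a) := by
    intro a x z p
    induction p with
    | nil => rfl
    | cons h p ih =>
      refine Eq.trans ?_ ih
      have h0 := horth (wz _ _ a) (hall _ _ h (wz_mem_base _ _ a)) y hy
      rw [inner_wz_left] at h0
      linarith
  have hconst : ∀ (a : Fin ν) (m m' : Fin N),
      (y : EuclideanSpace ℝ (Fin N × Fin ν)) (m, a)
        = (y : EuclideanSpace ℝ (Fin N × Fin ν)) (m', a) := by
    intro a m m'
    obtain ⟨p⟩ := hcon m m'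
    exact const a p
  have hzero : ∀ (m : Fin N) (a : Fin ν),
      (y : EuclideanSpace ℝ (Fin N × Fin ν)) (m, a) = 0 := by
    intro m a
    have hsum := y.2 a
    have : ∑ i : Fin N, (y : EuclideanSpace ℝ (Fin N × Fin ν)) (i, a)
        = (N : ℝ) * (y : EuclideanSpace ℝ (Fin N × Fin ν)) (m, a) := by
      rw [Finset.sum_congr rfl (fun i _ => hconst a i m)]
      simp [Finset.sum_const, mul_comm]
    rw [this] at hsum
    have hNne : (N : ℝ) ≠ 0 := by positivity
    exact (mul_eq_zero.mp hsum).resolve_left hNne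
  ext p
  · show (y : EuclideanSpace ℝ (Fin N × Fin ν)) p = 0
    obtain ⟨m, a⟩ := p
    exact hzero m a


/-- Vectors supported on `S`. -/
def supportedOn (N ν : ℕ) (S : Finset (Fin N)) : Submodule ℝ ↥(momZero N ν) where
  carrier := {v | ∀ m ∉ S, ∀ a : Fin ν, v.val (m, a) = 0}
  add_mem' := by
    intro x y hx hy m hm a
    show x.val (m, a) + y.val (m, a) = 0
    rw [hx m hm a, hy m hm a, add_zero]
  zero_mem' := by intro m _ a; rfl
  smul_mem' := by
    intro c x hx m hm a
    show c * x.val (m, a) = 0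
    rw [hx m hm a, mul_zero]

/-- Vectors constant on `S` (in each coordinate). -/
def constOn (N ν : ℕ) (S : Finset (Fin N)) : Submodule ℝ ↥(momZero N ν) where
  carrier := {v | ∀ m ∈ S, ∀ m' ∈ S, ∀ a : Fin ν, v.val (m, a) = v.val (m', a)}
  add_mem' := by
    intro x y hx hy m hm m' hm' a
    show x.val (m, a) + y.val (m, a) = x.val (m', a) + y.val (m', a)
    rw [hx m hm m' hm' a, hy m hm m' hm' a]
  zero_mem' := by intro m _ m' _ a; rfl
  smul_mem' := by
    intro c x hx m hm m' hm' a
    show c * x.val (m, a) = c * x.val (m', a)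
    rw [hx m hm m' hm' a]

lemma wz_ne_zero {i j : Fin N} (h : i ≠ j) (a : Fin ν) : wz i j a ≠ 0 := by
  intro hz
  have := congrArg (fun w : ↥(momZero N ν) => w.val (i, a)) hz
  rw [show (wz i j a : ↥(momZero N ν)).val (i, a) = wvec i j a (i, a) from rfl,
    wvec_apply] at this
  simp [Prod.ext_iff, h] at this

lemma sum_ite_mem_const (S : Finset (Fin N)) (c d : ℝ) :
    ∑ m : Fin N, (if m ∈ S then c else d) = S.card * c + (Finset.univ \ S).card * d := by
  rw [Finset.sum_ite]
  simp [Finset.filter_mem_eq_inter, Finset.univ_inter, mul_comm, Finset.filter_not]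

lemma sum_split (S : Finset (Fin N)) (f : Fin N → ℝ) :
    ∑ m : Fin N, f m = ∑ m ∈ S, f m + ∑ m ∈ Finset.univ \ S, f m := by
  rw [← Finset.compl_eq_univ_sdiff, Finset.sum_add_sum_compl]

lemma splitA (hν : 0 < ν) (G : SimpleGraph (Fin N)) (S : Finset (Fin N))
    (hclosed : ∀ i j, G.Adj i j → (i ∈ S ↔ j ∈ S))
    (s₁ s₂ : Fin N) (hs₁ : s₁ ∈ S) (hs₂ : s₂ ∈ S) (hne : s₁ ≠ s₂)
    (t : Fin N) (ht : t ∉ S) :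
    ∃ B₁ B₂ : Submodule ℝ ↥(momZero N ν),
      B₁ ≠ ⊥ ∧ B₂ ≠ ⊥ ∧ (∀ x ∈ B₁, ∀ y ∈ B₂, inner ℝ x y = (0 : ℝ)) ∧ B₁ ⊔ B₂ = ⊤ ∧
      ∀ i j : Fin N, G.Adj i j →
        (baseSpace N ν i j ≤ B₁ ∨ baseSpace N ν i j ≤ B₂) := by
  classical
  set μ : Fin ν := ⟨0, hν⟩
  have hStcard : 0 < (Finset.univ \ S).card :=
    Finset.card_pos.mpr ⟨t, Finset.mem_sdiff.mpr ⟨Finset.mem_univ t, ht⟩⟩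
  have hScard : (0:ℝ) < S.card := by exact_mod_cast Finset.card_pos.mpr ⟨s₁, hs₁⟩
  refine ⟨supportedOn N ν S, constOn N ν S, ?_, ?_, ?_, ?_, ?_⟩
  · -- supportedOn ≠ ⊥
    rw [Submodule.ne_bot_iff]
    refine ⟨wz s₁ s₂ μ, ?_, wz_ne_zero hne μ⟩
    intro m hm a
    show wvec s₁ s₂ μ (m, a) = 0
    rw [wvec_apply]
    have h1 : m ≠ s₁ := fun h => hm (h ▸ hs₁)
    have h2 : m ≠ s₂ := fun h => hm (h ▸ hs₂)
    simp [Prod.ext_iff, h1, h2]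
  · -- constOn ≠ ⊥
    rw [Submodule.ne_bot_iff]
    set c : ℝ := ((Finset.univ \ S).card : ℝ) with hc
    set d : ℝ := -(S.card : ℝ) with hd
    have hmem : (WithLp.toLp 2 (fun p : Fin N × Fin ν => if p.2 = μ then (if p.1 ∈ S then c else d) else 0) : EuclideanSpace ℝ (Fin N × Fin ν))
        ∈ momZero N ν := by
      intro a
      show ∑ i : Fin N, (if a = μ then (if i ∈ S then c else d) else 0) = 0
      by_cases ha : a = μ
      · simp only [ha, ite_true, if_pos rfl]
        rw [sum_ite_mem_const]
        rw [hc, hd]; ring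
      · simp [ha]
    refine ⟨⟨_, hmem⟩, ?_, ?_⟩
    · intro m hm m' hm' a
      show (if a = μ then (if m ∈ S then c else d) else 0)
        = (if a = μ then (if m' ∈ S then c else d) else 0)
      simp [hm, hm']
    · intro hz
      have h0 : (if (μ:Fin ν) = μ then (if s₁ ∈ S then c else d) else 0) = 0 := by
        have := congrArg (fun w : ↥(momZero N ν) => w.val (s₁, μ)) hz
        exact this
      simp only [if_pos rfl, if_pos hs₁] at h0
      rw [hc] at h0
      have : ((Finset.univ \ S).card : ℝ) ≠ 0 := by positivity
      exact this h0
  · -- orthogonality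
    intro x hx y hy
    rw [Submodule.coe_inner, PiLp.inner_apply]
    simp only [RCLike.inner_apply, conj_trivial]
    rw [Fintype.sum_prod_type, Finset.sum_comm]
    refine Finset.sum_eq_zero fun a _ => ?_
    have hcongr : ∀ m : Fin N, x.val (m, a) * y.val (m, a) = x.val (m, a) * y.val (s₁, a) := by
      intro m
      by_cases hm : m ∈ S
      · rw [hy m hm s₁ hs₁ a]
      · rw [hx m hm a, zero_mul, zero_mul]
    rw [Finset.sum_congr rfl (fun m _ => mul_comm (y.val (m, a)) (x.val (m, a)))]
    calc ∑ m : Fin N, x.val (m, a) * y.val (m, a)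
        = ∑ m : Fin N, x.val (m, a) * y.val (s₁, a) :=
          Finset.sum_congr rfl (fun m _ => hcongr m)
      _ = (∑ m : Fin N, x.val (m, a)) * y.val (s₁, a) := by rw [Finset.sum_mul]
      _ = 0 := by rw [x.2 a, zero_mul]
  · -- sup = ⊤
    rw [eq_top_iff]
    intro v _
    set σ : Fin ν → ℝ := fun a => ∑ m ∈ S, v.val (m, a) with hσ
    have hmem : (WithLp.toLp 2 (fun p : Fin N × Fin ν =>
        if p.1 ∈ S then σ p.2 / S.card else v.val p) : EuclideanSpace ℝ (Fin N × Fin ν)) ∈ momZero N ν := by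
      intro a
      show ∑ m : Fin N, (if m ∈ S then σ a / S.card else v.val (m, a)) = 0
      have hrw : ∀ m : Fin N, (if m ∈ S then σ a / S.card else v.val (m, a))
          = (if m ∈ S then σ a / S.card - v.val (m, a) else 0) + v.val (m, a) := by
        intro m; by_cases hm : m ∈ S <;> simp [hm]
      rw [Finset.sum_congr rfl (fun m _ => hrw m), Finset.sum_add_distrib, v.2 a, add_zero,
        Finset.sum_ite, Finset.sum_const_zero, add_zero, Finset.filter_mem_eq_inter,
        Finset.univ_inter, Finset.sum_sub_distrib, Finset.sum_const, nsmul_eq_mul]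
      simp only [hσ]
      field_simp
      ring
    set Y : ↥(momZero N ν) := ⟨_, hmem⟩ with hY
    have hYmem : Y ∈ constOn N ν S := by
      intro m hm m' hm' a
      show (if m ∈ S then σ a / S.card else v.val (m, a))
        = (if m' ∈ S then σ a / S.card else v.val (m', a))
      rw [if_pos hm, if_pos hm']
    have hXmem : v - Y ∈ supportedOn N ν S := by
      intro m hm a
      show v.val (m, a) - (if m ∈ S then σ a / S.card else v.val (m, a)) = 0
      rw [if_neg hm, sub_self]
    have : v = (v - Y) + Y := by abel
    rw [this]
    exact Submodule.add_mem_sup hXmem hYmem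
  · -- edges
    intro i j hij
    by_cases hi : i ∈ S
    · left
      intro v hv m hm a
      have h1 : m ≠ i := fun h => hm (h ▸ hi)
      have h2 : m ≠ j := fun h => hm (h ▸ (hclosed i j hij).mp hi)
      exact hv m h1 h2 a
    · right
      intro v hv m hm m' hm' a
      have hj : j ∉ S := fun h => hi ((hclosed i j hij).mpr h)
      have e1 : v.val (m, a) = 0 :=
        hv m (fun h => hi (h ▸ hm)) (fun h => hj (h ▸ hm)) a
      have e2 : v.val (m', a) = 0 :=
        hv m' (fun h => hi (h ▸ hm')) (fun h => hj (h ▸ hm')) a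
      rw [e1, e2]


/-- Vectors living only in coordinate `a₀`. -/
def coordOnly (N ν : ℕ) (a₀ : Fin ν) : Submodule ℝ ↥(momZero N ν) where
  carrier := {v | ∀ (m : Fin N) (a : Fin ν), a ≠ a₀ → v.val (m, a) = 0}
  add_mem' := by
    intro x y hx hy m a ha
    show x.val (m, a) + y.val (m, a) = 0
    rw [hx m a ha, hy m a ha, add_zero]
  zero_mem' := by intro m a _; rfl
  smul_mem' := by
    intro c x hx m a ha
    show c * x.val (m, a) = 0
    rw [hx m a ha, mul_zero]

/-- Vectors vanishing in coordinate `a₀`. -/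
def coordZero (N ν : ℕ) (a₀ : Fin ν) : Submodule ℝ ↥(momZero N ν) where
  carrier := {v | ∀ m : Fin N, v.val (m, a₀) = 0}
  add_mem' := by
    intro x y hx hy m
    show x.val (m, a₀) + y.val (m, a₀) = 0
    rw [hx m, hy m, add_zero]
  zero_mem' := by intro m; rfl
  smul_mem' := by
    intro c x hx m
    show c * x.val (m, a₀) = 0
    rw [hx m, mul_zero]

lemma splitC (hN : 2 ≤ N) (hν : 2 ≤ ν) (G : SimpleGraph (Fin N))
    (hnoedge : ∀ i j : Fin N, ¬ G.Adj i j) :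
    ∃ B₁ B₂ : Submodule ℝ ↥(momZero N ν),
      B₁ ≠ ⊥ ∧ B₂ ≠ ⊥ ∧ (∀ x ∈ B₁, ∀ y ∈ B₂, inner ℝ x y = (0 : ℝ)) ∧ B₁ ⊔ B₂ = ⊤ ∧
      ∀ i j : Fin N, G.Adj i j →
        (baseSpace N ν i j ≤ B₁ ∨ baseSpace N ν i j ≤ B₂) := by
  classical
  have hμν : 0 < ν := by omega
  set μ0 : Fin ν := ⟨0, by omega⟩ with hμ0
  set μ1 : Fin ν := ⟨1, by omega⟩ with hμ1
  set i0 : Fin N := ⟨0, by omega⟩ with hi0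
  set i1 : Fin N := ⟨1, by omega⟩ with hi1
  have hii : i0 ≠ i1 := by simp [hi0, hi1, Fin.ext_iff]
  have hμμ : μ1 ≠ μ0 := by simp [hμ0, hμ1, Fin.ext_iff]
  refine ⟨coordOnly N ν μ0, coordZero N ν μ0, ?_, ?_, ?_, ?_, ?_⟩
  · rw [Submodule.ne_bot_iff]
    refine ⟨wz i0 i1 μ0, ?_, wz_ne_zero hii μ0⟩
    intro m a ha
    show wvec i0 i1 μ0 (m, a) = 0
    rw [wvec_apply]
    simp [Prod.ext_iff, ha]
  · rw [Submodule.ne_bot_iff]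
    refine ⟨wz i0 i1 μ1, ?_, wz_ne_zero hii μ1⟩
    intro m
    show wvec i0 i1 μ1 (m, μ0) = 0
    rw [wvec_apply]
    simp [Prod.ext_iff, hμμ.symm]
  · intro x hx y hy
    rw [Submodule.coe_inner, PiLp.inner_apply]
    simp only [RCLike.inner_apply, conj_trivial]
    refine Finset.sum_eq_zero fun p _ => ?_
    obtain ⟨m, a⟩ := p
    by_cases ha : a = μ0
    · subst ha; rw [hy m, zero_mul]
    · rw [hx m a ha, mul_zero]
  · rw [eq_top_iff]
    intro v _
    have hmem : (WithLp.toLp 2 (fun p : Fin N × Fin ν => if p.2 = μ0 then v.val p else 0) : EuclideanSpace ℝ (Fin N × Fin ν)) ∈ momZero N ν := by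
      intro a
      show ∑ m : Fin N, (if a = μ0 then v.val (m, a) else 0) = 0
      by_cases ha : a = μ0
      · rw [Finset.sum_congr rfl (fun m _ => if_pos ha), ha]
        exact v.2 μ0
      · rw [Finset.sum_congr rfl (fun m _ => if_neg ha), Finset.sum_const_zero]
    set Y : ↥(momZero N ν) := ⟨_, hmem⟩ with hY
    have hY1 : Y ∈ coordOnly N ν μ0 := by
      intro m a ha
      show (if a = μ0 then v.val (m, a) else 0) = 0
      rw [if_neg ha]
    have hX2 : v - Y ∈ coordZero N ν μ0 := by
      intro m
      show v.val (m, μ0) - (if (μ0 : Fin ν) = μ0 then v.val (m, μ0) else 0) = 0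
      rw [if_pos rfl, sub_self]
    have : v = Y + (v - Y) := by abel
    rw [this]
    exact Submodule.add_mem_sup hY1 hX2
  · intro i j hij
    exact absurd hij (hnoedge i j)

end ONSP

/-- The system `{L_{ij} : {i,j} ∈ E(G)}` has the Orthogonal Non-Splitting Property
if and only if the collision graph `G` is connected. -/
theorem ONSP_iff_graph_connected (N ν : ℕ) (hN : 2 ≤ N) (hν : 2 ≤ ν)
    (G : SimpleGraph (Fin N)) :
    (¬ ∃ B₁ B₂ : Submodule ℝ ↥(momZero N ν),
        B₁ ≠ ⊥ ∧ B₂ ≠ ⊥ ∧ (∀ x ∈ B₁, ∀ y ∈ B₂, inner ℝ x y = (0 : ℝ)) ∧ B₁ ⊔ B₂ = ⊤ ∧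
        ∀ i j : Fin N, G.Adj i j →
          (baseSpace N ν i j ≤ B₁ ∨ baseSpace N ν i j ≤ B₂)) ↔
      G.Connected := by
  classical
  constructor
  · intro h
    by_contra hnc
    apply h
    have hnonempty : Nonempty (Fin N) := ⟨⟨0, by omega⟩⟩
    have hpre : ¬ G.Preconnected := fun hp => hnc ⟨hp⟩
    unfold SimpleGraph.Preconnected at hpre
    push_neg at hpre
    obtain ⟨u, v, huv⟩ := hpre
    set S : Finset (Fin N) := Finset.univ.filter (fun m => G.Reachable u m) with hSdef
    have hu : u ∈ S := by
      simp only [hSdef, Finset.mem_filter, Finset.mem_univ, true_and]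
      exact SimpleGraph.Reachable.refl u
    have hv : v ∉ S := by simp [hSdef, huv]
    have hclosed : ∀ i j, G.Adj i j → (i ∈ S ↔ j ∈ S) := by
      intro i j hij
      simp only [hSdef, Finset.mem_filter, Finset.mem_univ, true_and]
      exact ⟨fun hr => hr.trans hij.reachable, fun hr => hr.trans hij.symm.reachable⟩
    by_cases h2 : 2 ≤ S.card
    · obtain ⟨s₁, hs₁, s₂, hs₂, hne⟩ := Finset.one_lt_card.mp h2
      exact ONSP.splitA (by omega) G S hclosed s₁ s₂ hs₁ hs₂ hne v hv
    by_cases h2' : 2 ≤ Sᶜ.card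
    · obtain ⟨s₁, hs₁, s₂, hs₂, hne⟩ := Finset.one_lt_card.mp h2'
      refine ONSP.splitA (by omega) G Sᶜ ?_ s₁ s₂ hs₁ hs₂ hne u (by simp [hu])
      intro i j hij
      simp only [Finset.mem_compl]
      exact not_iff_not.mpr (hclosed i j hij)
    · have hc1 : S.card = 1 := by
        have : 0 < S.card := Finset.card_pos.mpr ⟨u, hu⟩
        omega
      have hc2 : Sᶜ.card = 1 := by
        have : 0 < Sᶜ.card := Finset.card_pos.mpr ⟨v, Finset.mem_compl.mpr hv⟩
        omega
      apply ONSP.splitC hN hν G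
      intro i j hij
      obtain ⟨a, ha⟩ := Finset.card_eq_one.mp hc1
      obtain ⟨b, hb⟩ := Finset.card_eq_one.mp hc2
      have hmem : ∀ m : Fin N, m = u ∨ m = v := by
        intro m
        by_cases hm : m ∈ S
        · left
          rw [ha, Finset.mem_singleton] at hm
          rw [ha, Finset.mem_singleton] at hu
          rw [hm, hu]
        · right
          have h1 : m ∈ Sᶜ := Finset.mem_compl.mpr hm
          have h2 : v ∈ Sᶜ := Finset.mem_compl.mpr hv
          rw [hb, Finset.mem_singleton] at h1 h2
          rw [h1, h2]
      rcases hmem i with hi | hi <;> rcases hmem j with hj | hj <;> subst hi <;> subst hj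
      · exact hij.ne rfl
      · exact huv hij.reachable
      · exact huv hij.symm.reachable
      · exact hij.ne rfl
  · intro hcon
    rintro ⟨B₁, B₂, hB1, hB2, horth, hsup, hedge⟩
    obtain ⟨i₀, j₀, h₀⟩ : ∃ i j, G.Adj i j := by
      obtain ⟨p⟩ := hcon.preconnected ⟨0, by omega⟩ ⟨1, by omega⟩
      cases p with
      | cons hadj _ => exact ⟨_, _, hadj⟩
    have hν0 : 0 < ν := by omega
    have hN0 : 0 < N := by omega
    rcases hedge i₀ j₀ h₀ with hB | hB
    · exact hB2 (ONSP.side_eq_bot hν0 hN0 hcon horth hedge h₀ hB)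
    · refine hB1 (ONSP.side_eq_bot hν0 hN0 hcon ?_ ?_ h₀ hB)
      · intro x hx y hy
        rw [real_inner_comm]
        exact horth y hy x hx
      · intro i j hij
        exact (hedge i j hij).symm
end
end
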